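/- Let n, m, s be positive integers. Assume a SUN_{n,s}(ξ,Ω,Δ,γ,Γ) prior density on f ∈ ℝⁿ and the probit affine likelihood L(f) := Φ_m(Z + W f; Σ) with W ∈ ℝ^{m×n}, Z ∈ ℝ^m and Σ ∈ ℝ^{m×m} symmetric positive definite. Then for every f ∈ ℝⁿ, Φ_m(Z + W f; Σ) · sun_{n,s}(f; ξ,Ω,Δ,γ,Γ) = (Φ_{s+m}(γ_p; Γ_p)/Φ_s(γ; Γ)) · sun_{n,s+m}(f; ξ, Ω, Δ_p, γ_p, Γ_p), where Δ_p := [Δ, Ω̄ D_Ω Wᵀ], γ_p := (γ, Z + Wξ), Γ_p := [[Γ, Δᵀ D_Ω Wᵀ],[W D_Ω Δ, W Ω Wᵀ + Σ]]; in particular the posterior density of f is the unified skew-normal density SUN_{n,s+m}(ξ, Ω, Δ_p, γ_p, Γ_p). (Lemma 2 of the paper.) -/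

import Mathlib

open MeasureTheory Matrix

/-- Centered multivariate normal density `φ(z; S)` with covariance `S`. -/
noncomputable def gaussPdf {ι : Type*} [Fintype ι] [DecidableEq ι]
    (S : Matrix ι ι ℝ) (z : ι → ℝ) : ℝ :=
  (2 * Real.pi) ^ (-(Fintype.card ι : ℝ) / 2) * S.det ^ (-(1 : ℝ) / 2) *
    Real.exp (-(1 / 2) * (z ⬝ᵥ (S⁻¹ *ᵥ z)))

/-- Centered multivariate normal CDF `Φ(a; S)` with covariance `S`. -/
noncomputable def gaussCdf {ι : Type*} [Fintype ι] [DecidableEq ι]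
    (S : Matrix ι ι ℝ) (a : ι → ℝ) : ℝ :=
  ∫ u in {u : ι → ℝ | ∀ i, u i ≤ a i}, gaussPdf S u

/-- `D_K`: diagonal matrix with entries `√(K i i)`. -/
noncomputable def dMat {ι : Type*} [Fintype ι] [DecidableEq ι]
    (K : Matrix ι ι ℝ) : Matrix ι ι ℝ :=
  Matrix.diagonal fun i => Real.sqrt (K i i)

/-- `K̄ := D_K⁻¹ K D_K⁻¹`: the correlation matrix associated with `K`. -/
noncomputable def corrMat {ι : Type*} [Fintype ι] [DecidableEq ι]
    (K : Matrix ι ι ℝ) : Matrix ι ι ℝ :=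
  (dMat K)⁻¹ * K * (dMat K)⁻¹

/-- The unified skew-normal density `sun(z; ξ, Ω, Δ, γ, Γ)`. -/
noncomputable def sunPdf {ι κ : Type*} [Fintype ι] [DecidableEq ι] [Fintype κ] [DecidableEq κ]
    (xi : ι → ℝ) (Om : Matrix ι ι ℝ) (De : Matrix ι κ ℝ) (ga : κ → ℝ) (Ga : Matrix κ κ ℝ)
    (z : ι → ℝ) : ℝ :=
  gaussPdf Om (z - xi) *
    gaussCdf (Ga - Deᵀ * (corrMat Om)⁻¹ * De)
      (ga + (Deᵀ * (corrMat Om)⁻¹ * (dMat Om)⁻¹) *ᵥ (z - xi)) /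
    gaussCdf Ga ga

section auxGauss
variable {ι κ : Type*} [Fintype ι] [DecidableEq ι] [Fintype κ] [DecidableEq κ]
open scoped MatrixOrder

lemma gaussPdf_pos {S : Matrix ι ι ℝ} (hS : S.PosDef) (z : ι → ℝ) : 0 < gaussPdf S z := by
  have h1 : (0:ℝ) < 2 * Real.pi := by positivity
  have h2 : (0:ℝ) < S.det := hS.det_pos
  unfold gaussPdf
  positivity

lemma integrable_gaussPdf {S : Matrix ι ι ℝ} (hS : S.PosDef) :
    Integrable (gaussPdf S) := by
  have hSi : (S⁻¹).PosDef := hS.inv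
  set B := CFC.sqrt (S⁻¹) with hBdef
  have hBB : B * B = S⁻¹ := CFC.sqrt_mul_sqrt_self _ hSi.posSemidef.nonneg
  have hBherm : B.IsHermitian := (CFC.sqrt_nonneg (S⁻¹)).posSemidef.1
  have hdet : B.det ≠ 0 := by
    intro h
    have h0 : (S⁻¹).det = 0 := by rw [← hBB, det_mul, h, mul_zero]
    have := hSi.det_pos
    linarith
  have hq : ∀ z : ι → ℝ, z ⬝ᵥ (S⁻¹ *ᵥ z) = (B *ᵥ z) ⬝ᵥ (B *ᵥ z) := by
    intro z
    rw [← hBB, ← mulVec_mulVec, dotProduct_mulVec]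
    congr 1
    rw [← mulVec_transpose]
    have : Bᵀ = B := by simpa [conjTranspose_eq_transpose_of_trivial] using hBherm.eq
    rw [this]
  have hg : Integrable (fun v : ι → ℝ => ∏ i, Real.exp (-(1/2) * (v i)^2)) := by
    apply Integrable.fintype_prod (f := fun (_ : ι) (x : ℝ) => Real.exp (-(1/2) * x^2))
    intro i
    simpa using integrable_exp_neg_mul_sq (by norm_num : (0:ℝ) < 1/2)
  have hmap := Real.map_matrix_volume_pi_eq_smul_volume_pi hdet
  have hcont : Continuous (Matrix.toLin' B) := LinearMap.continuous_of_finiteDimensional _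
  have hgm : Integrable (fun z : ι → ℝ => ∏ i, Real.exp (-(1/2) * ((B *ᵥ z) i)^2)) := by
    have h1 : Integrable (fun v : ι → ℝ => ∏ i, Real.exp (-(1/2) * (v i)^2))
        (Measure.map (Matrix.toLin' B) volume) := by
      rw [hmap]
      exact hg.smul_measure ENNReal.ofReal_ne_top
    have := (integrable_map_measure h1.aestronglyMeasurable
      hcont.measurable.aemeasurable).mp h1
    simpa [Function.comp_def, Matrix.toLin'_apply] using this
  have heq : gaussPdf S = fun z =>
      ((2 * Real.pi) ^ (-(Fintype.card ι : ℝ) / 2) * S.det ^ (-(1 : ℝ) / 2)) *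
        ∏ i, Real.exp (-(1/2) * ((B *ᵥ z) i)^2) := by
    funext z
    rw [gaussPdf, hq z]
    rw [← Real.exp_sum]
    congr 2
    rw [dotProduct, Finset.mul_sum]
    congr 1
    funext i
    ring
  rw [heq]
  exact hgm.const_mul _

lemma gaussCdf_pos {S : Matrix ι ι ℝ} (hS : S.PosDef) (a : ι → ℝ) : 0 < gaussCdf S a := by
  have hset : {u : ι → ℝ | ∀ i, u i ≤ a i} = Set.pi Set.univ (fun i => Set.Iic (a i)) := by
    ext u; simp [Set.mem_pi, Pi.le_def]
  rw [gaussCdf]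
  rw [setIntegral_pos_iff_support_of_nonneg_ae]
  · have hsupp : Function.support (gaussPdf S) = Set.univ := by
      ext z; simp [Function.support, (gaussPdf_pos hS z).ne']
    rw [hsupp, Set.univ_inter, hset, volume_pi_pi]
    simp only [Real.volume_Iic]
    exact CanonicallyOrderedAdd.prod_pos.mpr fun i _ => by simp
  · exact Filter.Eventually.of_forall fun z => (gaussPdf_pos hS z).le
  · exact (integrable_gaussPdf hS).integrableOn

lemma inv_fromBlocks_diag {A : Matrix ι ι ℝ} {B : Matrix κ κ ℝ}
    (hA : A.PosDef) (hB : B.PosDef) :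
    (fromBlocks A 0 0 B)⁻¹ = fromBlocks A⁻¹ 0 0 B⁻¹ := by
  apply Matrix.inv_eq_right_inv
  rw [fromBlocks_multiply]
  rw [Matrix.mul_nonsing_inv _ (isUnit_iff_ne_zero.mpr hA.det_pos.ne'),
    Matrix.mul_nonsing_inv _ (isUnit_iff_ne_zero.mpr hB.det_pos.ne')]
  simp [fromBlocks_one]

lemma gaussPdf_fromBlocks {A : Matrix ι ι ℝ} {B : Matrix κ κ ℝ}
    (hA : A.PosDef) (hB : B.PosDef) (u : ι ⊕ κ → ℝ) :
    gaussPdf (fromBlocks A 0 0 B) u = gaussPdf A (u ∘ Sum.inl) * gaussPdf B (u ∘ Sum.inr) := by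
  have hq : u ⬝ᵥ ((fromBlocks A 0 0 B)⁻¹ *ᵥ u)
      = (u ∘ Sum.inl) ⬝ᵥ (A⁻¹ *ᵥ (u ∘ Sum.inl)) + (u ∘ Sum.inr) ⬝ᵥ (B⁻¹ *ᵥ (u ∘ Sum.inr)) := by
    rw [inv_fromBlocks_diag hA hB, fromBlocks_mulVec]
    calc u ⬝ᵥ _ = Sum.elim (u ∘ Sum.inl) (u ∘ Sum.inr) ⬝ᵥ
        Sum.elim (A⁻¹ *ᵥ (u ∘ Sum.inl) + 0 *ᵥ (u ∘ Sum.inr))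
          (0 *ᵥ (u ∘ Sum.inl) + B⁻¹ *ᵥ (u ∘ Sum.inr)) := by rw [Sum.elim_comp_inl_inr]
      _ = _ := by rw [sumElim_dotProduct_sumElim]; simp
  rw [gaussPdf, gaussPdf, gaussPdf, hq, det_fromBlocks_zero₁₂]
  have hcard : (Fintype.card (ι ⊕ κ) : ℝ) = Fintype.card ι + Fintype.card κ := by
    simp [Fintype.card_sum]
  rw [hcard]
  have h2pi : (0:ℝ) < 2 * Real.pi := by positivity
  rw [show -(((Fintype.card ι : ℝ) + Fintype.card κ)) / 2
      = (-(Fintype.card ι : ℝ) / 2) + (-(Fintype.card κ : ℝ) / 2) by ring,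
    Real.rpow_add h2pi,
    Real.mul_rpow hA.det_pos.le hB.det_pos.le,
    show -(1/2:ℝ) * (_ + _) = -(1/2) * ((u ∘ Sum.inl) ⬝ᵥ (A⁻¹ *ᵥ (u ∘ Sum.inl)))
      + -(1/2) * ((u ∘ Sum.inr) ⬝ᵥ (B⁻¹ *ᵥ (u ∘ Sum.inr))) by ring,
    Real.exp_add]
  ring

lemma gaussCdf_fromBlocks {A : Matrix ι ι ℝ} {B : Matrix κ κ ℝ}
    (hA : A.PosDef) (hB : B.PosDef) (a : ι → ℝ) (b : κ → ℝ) :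
    gaussCdf (fromBlocks A 0 0 B) (Sum.elim a b) = gaussCdf A a * gaussCdf B b := by
  have hmp := volume_measurePreserving_sumPiEquivProdPi_symm (fun _ : ι ⊕ κ => ℝ)
  have hemb := (MeasurableEquiv.sumPiEquivProdPi (fun _ : ι ⊕ κ => ℝ)).symm.measurableEmbedding
  rw [gaussCdf, ← hmp.setIntegral_preimage_emb hemb]
  have hpre : (MeasurableEquiv.sumPiEquivProdPi (fun _ : ι ⊕ κ => ℝ)).symm ⁻¹'
      {u : ι ⊕ κ → ℝ | ∀ i, u i ≤ Sum.elim a b i}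
      = {x : ι → ℝ | ∀ i, x i ≤ a i} ×ˢ {y : κ → ℝ | ∀ i, y i ≤ b i} := by
    ext ⟨p, q⟩
    simp only [Set.mem_preimage, Set.mem_setOf_eq, Set.mem_prod, Sum.forall]
    rfl
  have hfun : ∀ p : (ι → ℝ) × (κ → ℝ),
      gaussPdf (fromBlocks A 0 0 B)
        ((MeasurableEquiv.sumPiEquivProdPi (fun _ : ι ⊕ κ => ℝ)).symm p)
      = gaussPdf A p.1 * gaussPdf B p.2 := by
    intro p
    rw [gaussPdf_fromBlocks hA hB]
    rfl
  have hma : MeasurableSet {x : ι → ℝ | ∀ i, x i ≤ a i} := by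
    have : {x : ι → ℝ | ∀ i, x i ≤ a i} = Set.pi Set.univ (fun i => Set.Iic (a i)) := by
      ext x; simp [Set.mem_pi, Pi.le_def]
    rw [this]; exact MeasurableSet.univ_pi fun i => measurableSet_Iic
  have hmb : MeasurableSet {y : κ → ℝ | ∀ i, y i ≤ b i} := by
    have : {y : κ → ℝ | ∀ i, y i ≤ b i} = Set.pi Set.univ (fun i => Set.Iic (b i)) := by
      ext y; simp [Set.mem_pi, Pi.le_def]
    rw [this]; exact MeasurableSet.univ_pi fun i => measurableSet_Iic
  rw [hpre, setIntegral_congr_fun (hma.prod hmb) (fun p _ => hfun p),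
    Measure.volume_eq_prod, setIntegral_prod_mul]
  rfl

lemma posDef_block₁₁ {A : Matrix ι ι ℝ} {B : Matrix ι κ ℝ} {C : Matrix κ ι ℝ}
    {D : Matrix κ κ ℝ} (h : (fromBlocks A B C D).PosDef) : A.PosDef := by
  refine PosDef.of_dotProduct_mulVec_pos ?_ ?_
  · ext i j
    have := congrFun (congrFun h.1 (Sum.inl i)) (Sum.inl j)
    simpa [conjTranspose_apply, fromBlocks] using this
  · intro x hx
    have hv : (Sum.elim x 0 : ι ⊕ κ → ℝ) ≠ 0 := by
      intro hc
      apply hx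
      funext i
      exact congrFun hc (Sum.inl i)
    have := h.dotProduct_mulVec_pos hv
    rw [fromBlocks_mulVec] at this
    simpa [Function.star_sumElim, sumElim_dotProduct_sumElim] using this

lemma posDef_block₂₂ {A : Matrix ι ι ℝ} {B : Matrix ι κ ℝ} {C : Matrix κ ι ℝ}
    {D : Matrix κ κ ℝ} (h : (fromBlocks A B C D).PosDef) : D.PosDef := by
  refine PosDef.of_dotProduct_mulVec_pos ?_ ?_
  · ext i j
    have := congrFun (congrFun h.1 (Sum.inr i)) (Sum.inr j)
    simpa [conjTranspose_apply, fromBlocks] using this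
  · intro x hx
    have hv : (Sum.elim 0 x : ι ⊕ κ → ℝ) ≠ 0 := by
      intro hc
      apply hx
      funext i
      exact congrFun hc (Sum.inr i)
    have := h.dotProduct_mulVec_pos hv
    rw [fromBlocks_mulVec] at this
    simpa [Function.star_sumElim, sumElim_dotProduct_sumElim] using this

lemma posDef_fromBlocks_diag {A : Matrix ι ι ℝ} {B : Matrix κ κ ℝ}
    (hA : A.PosDef) (hB : B.PosDef) : (fromBlocks A 0 0 B).PosDef := by
  refine PosDef.of_dotProduct_mulVec_pos ?_ ?_
  · ext i j
    cases i <;> cases j <;>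
      simp [conjTranspose_apply, fromBlocks] <;>
      first
        | exact congrFun (congrFun hA.1 _) _
        | exact congrFun (congrFun hB.1 _) _
  · intro x hx
    have hx' : x ∘ Sum.inl ≠ 0 ∨ x ∘ Sum.inr ≠ 0 := by
      by_contra hc
      push_neg at hc
      apply hx
      funext i
      cases i with
      | inl i => exact congrFun hc.1 i
      | inr i => exact congrFun hc.2 i
    have key : star x ⬝ᵥ (fromBlocks A 0 0 B *ᵥ x)
        = star (x ∘ Sum.inl) ⬝ᵥ (A *ᵥ (x ∘ Sum.inl))
          + star (x ∘ Sum.inr) ⬝ᵥ (B *ᵥ (x ∘ Sum.inr)) := by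
      rw [fromBlocks_mulVec]
      calc star x ⬝ᵥ _ = Sum.elim (star (x ∘ Sum.inl)) (star (x ∘ Sum.inr)) ⬝ᵥ
          Sum.elim (A *ᵥ (x ∘ Sum.inl) + 0 *ᵥ (x ∘ Sum.inr))
            (0 *ᵥ (x ∘ Sum.inl) + B *ᵥ (x ∘ Sum.inr)) := by
            congr 1
            funext i
            cases i <;> rfl
        _ = _ := by rw [sumElim_dotProduct_sumElim]; simp
    rw [key]
    rcases hx' with h1 | h1
    · exact add_pos_of_pos_of_nonneg (hA.dotProduct_mulVec_pos h1) (hB.posSemidef.dotProduct_mulVec_nonneg _)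
    · exact add_pos_of_nonneg_of_pos (hA.posSemidef.dotProduct_mulVec_nonneg _) (hB.dotProduct_mulVec_pos h1)

lemma schur₂₂_posDef {A : Matrix ι ι ℝ} {B : Matrix ι κ ℝ} {D : Matrix κ κ ℝ}
    (hD : D.PosDef) (h : (fromBlocks A B Bᵀ D).PosDef) : (A - B * D⁻¹ * Bᵀ).PosDef := by
  haveI : Invertible D := D.invertibleOfIsUnitDet (isUnit_iff_ne_zero.mpr hD.det_pos.ne')
  have hBt : (Bᴴ : Matrix κ ι ℝ) = Bᵀ := conjTranspose_eq_transpose_of_trivial B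
  have hpsd : (B * D⁻¹ * Bᵀ).PosSemidef := by
    have := hD.inv.posSemidef.mul_mul_conjTranspose_same B
    rwa [hBt] at this
  refine PosDef.of_dotProduct_mulVec_pos ?_ ?_
  · exact ((posDef_block₁₁ h).1.sub hpsd.1)
  · intro x hx
    have hy := schur_complement_eq₂₂ A B x (-((D⁻¹ * Bᴴ) *ᵥ x)) hD.1
    rw [hBt] at hy
    have hv : (Sum.elim x (-((D⁻¹ * Bᵀ) *ᵥ x)) : ι ⊕ κ → ℝ) ≠ 0 := by
      intro hc
      apply hx
      funext i
      exact congrFun hc (Sum.inl i)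
    have hpos := h.dotProduct_mulVec_pos hv
    rw [dotProduct_mulVec, hy] at hpos
    simp only [neg_add_cancel, add_neg_cancel] at hpos
    rw [dotProduct_mulVec]
    simpa using hpos

lemma sum_elim_add_sum_elim {a c : ι → ℝ} {b d : κ → ℝ} :
    Sum.elim a b + Sum.elim c d = Sum.elim (a + c) (b + d) := by
  funext i
  cases i <;> rfl

end auxGauss

/-- Lemma 2: the SUN prior is conjugate to the probit affine likelihood. -/
theorem sun_probit_affine_conjugate
    {n m s : ℕ} (hn : 0 < n) (hm : 0 < m) (hs : 0 < s)
    (xi : Fin n → ℝ) (Om : Matrix (Fin n) (Fin n) ℝ) (hOm : Om.PosDef)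
    (De : Matrix (Fin n) (Fin s) ℝ) (ga : Fin s → ℝ)
    (Ga : Matrix (Fin s) (Fin s) ℝ) (hGa : Ga.IsSymm)
    (hM : (Matrix.fromBlocks Ga Deᵀ De (corrMat Om)).PosDef)
    (W : Matrix (Fin m) (Fin n) ℝ) (Z : Fin m → ℝ)
    (Sg : Matrix (Fin m) (Fin m) ℝ) (hSg : Sg.PosDef)
    (Dep : Matrix (Fin n) (Fin s ⊕ Fin m) ℝ) (gap : Fin s ⊕ Fin m → ℝ)
    (Gap : Matrix (Fin s ⊕ Fin m) (Fin s ⊕ Fin m) ℝ)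
    (hDep : Dep = Matrix.fromCols De (corrMat Om * dMat Om * Wᵀ))
    (hgap : gap = Sum.elim ga (Z + W *ᵥ xi))
    (hGap : Gap = Matrix.fromBlocks Ga (Deᵀ * dMat Om * Wᵀ) (W * dMat Om * De)
      (W * Om * Wᵀ + Sg)) :
    ∀ f : Fin n → ℝ,
      gaussCdf Sg (Z + W *ᵥ f) * sunPdf xi Om De ga Ga f =
        (gaussCdf Gap gap / gaussCdf Ga ga) * sunPdf xi Om Dep gap Gap f := by
  intro f
  set D := dMat Om with hDdef
  set C := corrMat Om with hCdef
  -- basic facts about D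
  have hdiag : ∀ i, 0 < Om i i := by
    intro i
    have hne : (Pi.single i 1 : Fin n → ℝ) ≠ 0 := by
      intro hc
      have := congrFun hc i
      simp at this
    have := hOm.dotProduct_mulVec_pos hne
    simpa [mulVec_single, single_dotProduct] using this
  have hsq : ∀ i, 0 < Real.sqrt (Om i i) := fun i => Real.sqrt_pos.mpr (hdiag i)
  have hDdet : D.det ≠ 0 := by
    rw [hDdef, dMat, det_diagonal]
    exact (Finset.prod_pos fun i _ => hsq i).ne'
  have hDD : D * D⁻¹ = 1 := Matrix.mul_nonsing_inv _ (isUnit_iff_ne_zero.mpr hDdet)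
  have hDD' : D⁻¹ * D = 1 := Matrix.nonsing_inv_mul _ (isUnit_iff_ne_zero.mpr hDdet)
  have hOmdet : Om.det ≠ 0 := hOm.det_pos.ne'
  have hOmT : Omᵀ = Om := by
    simpa [conjTranspose_eq_transpose_of_trivial] using hOm.1.eq
  have hDT : Dᵀ = D := by rw [hDdef, dMat, diagonal_transpose]
  have hDCD : D * C * D = Om := by
    rw [hCdef, corrMat, ← hDdef]
    calc D * (D⁻¹ * Om * D⁻¹) * D = D * D⁻¹ * (Om * (D⁻¹ * D)) := by
          simp only [Matrix.mul_assoc]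
      _ = Om := by rw [hDD, hDD', Matrix.mul_one, Matrix.one_mul]
  have hCT : Cᵀ = C := by
    rw [hCdef, corrMat, ← hDdef]
    rw [Matrix.transpose_mul, Matrix.transpose_mul, Matrix.transpose_nonsing_inv, hDT, hOmT]
    simp only [Matrix.mul_assoc]
  -- positive definiteness facts
  have hC : C.PosDef := posDef_block₂₂ hM
  have hGaPD : Ga.PosDef := posDef_block₁₁ hM
  have hCdet : C.det ≠ 0 := hC.det_pos.ne'
  have hCC : C * C⁻¹ = 1 := Matrix.mul_nonsing_inv _ (isUnit_iff_ne_zero.mpr hCdet)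
  have hCC' : C⁻¹ * C = 1 := Matrix.nonsing_inv_mul _ (isUnit_iff_ne_zero.mpr hCdet)
  have hSA : (Ga - Deᵀ * C⁻¹ * De).PosDef := by
    have hM' : (fromBlocks Ga Deᵀ (Deᵀ)ᵀ C).PosDef := by
      rwa [Matrix.transpose_transpose]
    have := schur₂₂_posDef hC hM'
    rwa [Matrix.transpose_transpose] at this
  -- key algebraic identities
  have hDepT2 : (C * D * Wᵀ)ᵀ = W * (D * C) := by
    rw [Matrix.transpose_mul, Matrix.transpose_mul, Matrix.transpose_transpose, hDT, hCT]
  have hDC : Depᵀ * C⁻¹ = fromRows (Deᵀ * C⁻¹) (W * D) := by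
    rw [hDep, transpose_fromCols, hDepT2, fromRows_mul,
      show W * (D * C) * C⁻¹ = W * D by
        calc W * (D * C) * C⁻¹ = W * (D * (C * C⁻¹)) := by simp only [Matrix.mul_assoc]
          _ = W * D := by rw [hCC, Matrix.mul_one]]
  have e12 : Deᵀ * C⁻¹ * (C * D * Wᵀ) = Deᵀ * D * Wᵀ := by
    calc Deᵀ * C⁻¹ * (C * D * Wᵀ) = Deᵀ * (C⁻¹ * C * (D * Wᵀ)) := by
          simp only [Matrix.mul_assoc]
      _ = Deᵀ * (D * Wᵀ) := by rw [hCC', Matrix.one_mul]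
      _ = Deᵀ * D * Wᵀ := by rw [Matrix.mul_assoc]
  have e22 : W * D * (C * D * Wᵀ) = W * Om * Wᵀ := by
    calc W * D * (C * D * Wᵀ) = W * (D * C * D) * Wᵀ := by simp only [Matrix.mul_assoc]
      _ = W * Om * Wᵀ := by rw [hDCD]
  have key1 : Depᵀ * C⁻¹ * Dep
      = fromBlocks (Deᵀ * C⁻¹ * De) (Deᵀ * D * Wᵀ) (W * D * De) (W * Om * Wᵀ) := by
    rw [hDC, hDep, fromRows_mul_fromCols, e12, e22]
  have fromBlocks_sub' : ∀ (A A' : Matrix (Fin s) (Fin s) ℝ)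
      (B B' : Matrix (Fin s) (Fin m) ℝ) (C C' : Matrix (Fin m) (Fin s) ℝ)
      (E E' : Matrix (Fin m) (Fin m) ℝ),
      fromBlocks A B C E - fromBlocks A' B' C' E'
        = fromBlocks (A - A') (B - B') (C - C') (E - E') := by
    intro A A' B B' C C' E E'
    ext i j
    cases i <;> cases j <;> simp [fromBlocks]
  have key2 : Gap - Depᵀ * C⁻¹ * Dep = fromBlocks (Ga - Deᵀ * C⁻¹ * De) 0 0 Sg := by
    rw [hGap, key1, fromBlocks_sub', sub_self, sub_self, add_sub_cancel_left]
  have key3 : gap + (Depᵀ * C⁻¹ * D⁻¹) *ᵥ (f - xi)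
      = Sum.elim (ga + (Deᵀ * C⁻¹ * D⁻¹) *ᵥ (f - xi)) (Z + W *ᵥ f) := by
    have hrow : Depᵀ * C⁻¹ * D⁻¹ = fromRows (Deᵀ * C⁻¹ * D⁻¹) W := by
      rw [hDC, fromRows_mul,
        show W * D * D⁻¹ = W by
          rw [Matrix.mul_assoc, hDD, Matrix.mul_one]]
    rw [hrow, fromRows_mulVec, hgap, sum_elim_add_sum_elim,
      show Z + W *ᵥ xi + W *ᵥ (f - xi) = Z + W *ᵥ f by rw [mulVec_sub]; abel]
  have hpsdDep : (Depᵀ * C⁻¹ * Dep).PosSemidef := by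
    have := hC.inv.posSemidef.conjTranspose_mul_mul_same Dep
    rwa [conjTranspose_eq_transpose_of_trivial] at this
  have hGapPD : Gap.PosDef := by
    have hG2 : Gap = fromBlocks (Ga - Deᵀ * C⁻¹ * De) 0 0 Sg + Depᵀ * C⁻¹ * Dep := by
      rw [← key2, sub_add_cancel]
    rw [hG2]
    exact (posDef_fromBlocks_diag hSA hSg).add_posSemidef hpsdDep
  have hP : 0 < gaussCdf Gap gap := gaussCdf_pos hGapPD gap
  have hG : 0 < gaussCdf Ga ga := gaussCdf_pos hGaPD ga
  rw [sunPdf, sunPdf, ← hCdef, ← hDdef, key2, key3, gaussCdf_fromBlocks hSA hSg]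
  field_simp
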